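/- Let S be a numerical semigroup with critical element k and f an automorphism of P(S). Then f fixes every discrete interval [i, j] = {x ∈ ℕ : i ≤ x ≤ j} with k ≤ i ≤ j, i.e., f([i, j]) = [i, j]. -/

import Mathlib

set_option linter.unusedSectionVars false
set_option linter.unusedVariables false
set_option linter.unnecessarySeqFocus false


open Pointwise

/-- The power semigroup `P(S)`: finite nonempty subsets of `S`. -/
def PS (S : Set ℕ) : Set (Finset ℕ) := {X | X.Nonempty ∧ (X : Set ℕ) ⊆ S}

/-- `f` is an automorphism of the power semigroup `P(S)`:
an additive bijection of `P(S)` (setwise addition). -/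
def IsPowerAut (S : Set ℕ) (f : Finset ℕ → Finset ℕ) : Prop :=
  (∀ X ∈ PS S, f X ∈ PS S) ∧
  (∀ X ∈ PS S, ∀ Y ∈ PS S, f X = f Y → X = Y) ∧
  (∀ Y ∈ PS S, ∃ X ∈ PS S, f X = Y) ∧
  (∀ X ∈ PS S, ∀ Y ∈ PS S, f (X + Y) = f X + f Y)

/-- `S` is a numerical semigroup: a subsemigroup of `(ℕ, +)` with finite complement. -/
def IsNumSgp (S : Set ℕ) : Prop :=
  (∀ a ∈ S, ∀ b ∈ S, a + b ∈ S) ∧ (Sᶜ).Finite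

/-- `k` is the critical element of `S`: the least `k` with `[k, ∞) ⊆ S`. -/
def IsCritical (S : Set ℕ) (k : ℕ) : Prop :=
  (∀ n, k ≤ n → n ∈ S) ∧ ∀ j, (∀ n, j ≤ n → n ∈ S) → k ≤ j

noncomputable section AutAux

/-- min with junk value. -/
noncomputable def mn (X : Finset ℕ) : ℕ := if h : X.Nonempty then X.min' h else 0
noncomputable def mx (X : Finset ℕ) : ℕ := if h : X.Nonempty then X.max' h else 0

lemma mn_mem {X : Finset ℕ} (h : X.Nonempty) : mn X ∈ X := by
  rw [mn, dif_pos h]; exact X.min'_mem h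

lemma mx_mem {X : Finset ℕ} (h : X.Nonempty) : mx X ∈ X := by
  rw [mx, dif_pos h]; exact X.max'_mem h

lemma mn_le {X : Finset ℕ} {x : ℕ} (hx : x ∈ X) : mn X ≤ x := by
  rw [mn, dif_pos ⟨x, hx⟩]; exact X.min'_le x hx

lemma le_mx {X : Finset ℕ} {x : ℕ} (hx : x ∈ X) : x ≤ mx X := by
  rw [mx, dif_pos ⟨x, hx⟩]; exact X.le_max' x hx

lemma mn_le_mx {X : Finset ℕ} (h : X.Nonempty) : mn X ≤ mx X :=
  le_mx (mn_mem h)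

lemma le_mn {X : Finset ℕ} {x : ℕ} (h : X.Nonempty) (hb : ∀ y ∈ X, x ≤ y) : x ≤ mn X :=
  hb _ (mn_mem h)

lemma mx_le {X : Finset ℕ} {x : ℕ} (h : X.Nonempty) (hb : ∀ y ∈ X, y ≤ x) : mx X ≤ x :=
  hb _ (mx_mem h)

lemma mn_add {X Y : Finset ℕ} (hX : X.Nonempty) (hY : Y.Nonempty) :
    mn (X + Y) = mn X + mn Y := by
  apply le_antisymm
  · exact mn_le (Finset.add_mem_add (mn_mem hX) (mn_mem hY))
  · apply le_mn (hX.add hY)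
    intro y hy
    rw [Finset.mem_add] at hy
    obtain ⟨a, ha, b, hb, rfl⟩ := hy
    exact Nat.add_le_add (mn_le ha) (mn_le hb)

lemma mx_add {X Y : Finset ℕ} (hX : X.Nonempty) (hY : Y.Nonempty) :
    mx (X + Y) = mx X + mx Y := by
  apply le_antisymm
  · apply mx_le (hX.add hY)
    intro y hy
    rw [Finset.mem_add] at hy
    obtain ⟨a, ha, b, hb, rfl⟩ := hy
    exact Nat.add_le_add (le_mx ha) (le_mx hb)
  · exact le_mx (Finset.add_mem_add (mx_mem hX) (mx_mem hY))

lemma mn_singleton (a : ℕ) : mn {a} = a := by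
  apply le_antisymm (mn_le (Finset.mem_singleton_self a))
  have := mn_mem (Finset.singleton_nonempty a)
  rw [Finset.mem_singleton] at this
  omega

lemma mx_singleton (a : ℕ) : mx {a} = a := by
  apply le_antisymm
  · have := mx_mem (Finset.singleton_nonempty a)
    rw [Finset.mem_singleton] at this; omega
  · exact le_mx (Finset.mem_singleton_self a)

lemma mn_Icc {a b : ℕ} (h : a ≤ b) : mn (Finset.Icc a b) = a := by
  apply le_antisymm (mn_le (Finset.mem_Icc.2 ⟨le_rfl, h⟩))
  have := mn_mem (X := Finset.Icc a b) ⟨a, Finset.mem_Icc.2 ⟨le_rfl, h⟩⟩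
  rw [Finset.mem_Icc] at this
  omega

lemma mx_Icc {a b : ℕ} (h : a ≤ b) : mx (Finset.Icc a b) = b := by
  apply le_antisymm
  · have := mx_mem (X := Finset.Icc a b) ⟨a, Finset.mem_Icc.2 ⟨le_rfl, h⟩⟩
    rw [Finset.mem_Icc] at this; omega
  · exact le_mx (Finset.mem_Icc.2 ⟨h, le_rfl⟩)

lemma subset_Icc_mn_mx (X : Finset ℕ) : X ⊆ Finset.Icc (mn X) (mx X) := by
  intro x hx
  exact Finset.mem_Icc.2 ⟨mn_le hx, le_mx hx⟩

lemma eq_singleton_of_mn_eq_mx {X : Finset ℕ} (h : X.Nonempty) (he : mn X = mx X) :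
    X = {mn X} := by
  apply Finset.eq_singleton_iff_unique_mem.2
  refine ⟨mn_mem h, fun x hx => ?_⟩
  have := mn_le hx
  have := le_mx hx
  omega

lemma Icc_add_Icc' {a b c d : ℕ} (h1 : a ≤ b) (h2 : c ≤ d) :
    Finset.Icc a b + Finset.Icc c d = Finset.Icc (a+c) (b+d) := by
  ext s
  simp only [Finset.mem_add, Finset.mem_Icc]
  constructor
  · rintro ⟨x, hx, y, hy, rfl⟩; omega
  · rintro ⟨hs1, hs2⟩
    refine ⟨min b (s - c), by omega, s - min b (s - c), by omega, by omega⟩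

lemma singleton_add_singleton' (a b : ℕ) : ({a} : Finset ℕ) + {b} = {a + b} := by
  ext s
  simp only [Finset.mem_add, Finset.mem_singleton]
  constructor
  · rintro ⟨x, rfl, y, rfl, rfl⟩; rfl
  · rintro rfl; exact ⟨a, rfl, b, rfl, rfl⟩

lemma singleton_add_cancel {a : ℕ} {X Y : Finset ℕ} (h : {a} + X = {a} + Y) : X = Y := by
  have e : ∀ Z : Finset ℕ, ({a} + Z : Finset ℕ) = Z.image (a + ·) := by
    intro Z; rw [Finset.singleton_add]; rfl
  rw [e, e] at h
  exact Finset.image_injective (add_right_injective a) h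

end AutAux
section Sgp

variable {S : Set ℕ} {k : ℕ}

lemma PS_add (hSc : ∀ a ∈ S, ∀ b ∈ S, a + b ∈ S) {X Y : Finset ℕ}
    (hX : X ∈ PS S) (hY : Y ∈ PS S) : X + Y ∈ PS S := by
  refine ⟨hX.1.add hY.1, ?_⟩
  intro s hs
  rw [Finset.mem_coe, Finset.mem_add] at hs
  obtain ⟨x, hx, y, hy, rfl⟩ := hs
  exact hSc x (hX.2 hx) y (hY.2 hy)

lemma singleton_mem_PS {s : ℕ} (hs : s ∈ S) : ({s} : Finset ℕ) ∈ PS S := by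
  refine ⟨Finset.singleton_nonempty s, ?_⟩
  intro x hx
  rw [Finset.mem_coe, Finset.mem_singleton] at hx
  subst hx; exact hs

lemma Icc_mem_PS (hkS : ∀ n, k ≤ n → n ∈ S) {a b : ℕ} (ha : k ≤ a) (hab : a ≤ b) :
    Finset.Icc a b ∈ PS S := by
  refine ⟨⟨a, Finset.mem_Icc.2 ⟨le_rfl, hab⟩⟩, ?_⟩
  intro x hx
  rw [Finset.mem_coe, Finset.mem_Icc] at hx
  exact hkS x (by omega)

/-- Non-cancellativity of non-singletons: key witness lemma. -/
lemma non_cancel (hkS : ∀ n, k ≤ n → n ∈ S) {X : Finset ℕ} (hX : X.Nonempty)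
    (hlt : mn X < mx X) :
    ∃ Y Z, Y ∈ PS S ∧ Z ∈ PS S ∧ Y ≠ Z ∧ X + Y = X + Z := by
  set b := mn X with hb
  set c := mx X with hc
  set l := c - b with hl
  have hl1 : 1 ≤ l := by omega
  set Y : Finset ℕ := Finset.Icc k (k + 2 * l) with hY
  set Z : Finset ℕ := Y.erase (k + l) with hZ
  have hYPS : Y ∈ PS S := Icc_mem_PS hkS le_rfl (by omega)
  have hkZ : k ∈ Z := by
    rw [hZ, Finset.mem_erase]
    exact ⟨by omega, Finset.mem_Icc.2 ⟨le_rfl, by omega⟩⟩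
  have hZPS : Z ∈ PS S := by
    refine ⟨⟨k, hkZ⟩, ?_⟩
    intro x hx
    rw [Finset.mem_coe, hZ, Finset.mem_erase, Finset.mem_Icc] at hx
    exact hkS x hx.2.1
  refine ⟨Y, Z, hYPS, hZPS, ?_, ?_⟩
  · intro h
    have : (k + l) ∈ Z := by
      rw [← h]; exact Finset.mem_Icc.2 ⟨by omega, by omega⟩
    rw [hZ, Finset.mem_erase] at this
    exact this.1 rfl
  · apply le_antisymm
    · intro s hs
      rw [Finset.mem_add] at hs ⊢
      obtain ⟨x, hx, y, hy, rfl⟩ := hs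
      by_cases hy2 : y = k + l
      · subst hy2
        by_cases hxb : x = b
        · subst hxb
          refine ⟨c, mx_mem hX, k, hkZ, by omega⟩
        · have hxb' : b < x := lt_of_le_of_ne (mn_le hx) (Ne.symm hxb)
          have hxc : x ≤ c := le_mx hx
          refine ⟨b, mn_mem hX, (x - b) + (k + l), ?_, by omega⟩
          rw [hZ, Finset.mem_erase, Finset.mem_Icc]
          refine ⟨by omega, by omega, by omega⟩
      · refine ⟨x, hx, y, ?_, rfl⟩
        rw [hZ, Finset.mem_erase]
        exact ⟨hy2, hy⟩
    · apply Finset.add_subset_add_left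
      exact Finset.erase_subset _ _

end Sgp
section Aut

variable {S : Set ℕ} {k : ℕ} {f : Finset ℕ → Finset ℕ}

/-- Inverse automorphism. -/
lemma exists_inverse_aut (hSc : ∀ a ∈ S, ∀ b ∈ S, a + b ∈ S) (hf : IsPowerAut S f) :
    ∃ g, IsPowerAut S g ∧ (∀ X ∈ PS S, g (f X) = X) ∧ (∀ Y ∈ PS S, f (g Y) = Y) := by
  classical
  obtain ⟨hmap, hinj, hsurj, hadd⟩ := hf
  choose u hu1 hu2 using hsurj
  set g : Finset ℕ → Finset ℕ := fun Y => if h : Y ∈ PS S then u Y h else Y with hg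
  have hgmap : ∀ Y ∈ PS S, g Y ∈ PS S := by
    intro Y hY; rw [hg]; simp only [dif_pos hY]; exact hu1 Y hY
  have hfg : ∀ Y ∈ PS S, f (g Y) = Y := by
    intro Y hY; rw [hg]; simp only [dif_pos hY]; exact hu2 Y hY
  have hgf : ∀ X ∈ PS S, g (f X) = X := by
    intro X hX
    have h1 : f X ∈ PS S := hmap X hX
    apply hinj _ (hgmap _ h1) _ hX
    rw [hfg _ h1]
  refine ⟨g, ⟨hgmap, ?_, ?_, ?_⟩, hgf, hfg⟩
  · intro Y1 h1 Y2 h2 he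
    rw [← hfg Y1 h1, ← hfg Y2 h2, he]
  · intro X hX
    exact ⟨f X, hmap X hX, hgf X hX⟩
  · intro Y1 h1 Y2 h2
    have hs : Y1 + Y2 ∈ PS S := PS_add hSc h1 h2
    apply hinj _ (hgmap _ hs) _ (PS_add hSc (hgmap _ h1) (hgmap _ h2))
    rw [hfg _ hs, hadd _ (hgmap _ h1) _ (hgmap _ h2), hfg _ h1, hfg _ h2]

/-- `f` sends singletons to singletons. -/
lemma f_sing (hSc : ∀ a ∈ S, ∀ b ∈ S, a + b ∈ S) (hkS : ∀ n, k ≤ n → n ∈ S)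
    (hf : IsPowerAut S f) {s : ℕ} (hs : s ∈ S) :
    f {s} = {mn (f {s})} ∧ mn (f {s}) ∈ S := by
  obtain ⟨hmap, hinj, hsurj, hadd⟩ := hf
  have hsPS : ({s} : Finset ℕ) ∈ PS S := singleton_mem_PS hs
  have hA : f {s} ∈ PS S := hmap _ hsPS
  have heq : mn (f {s}) = mx (f {s}) := by
    by_contra hne
    have hlt : mn (f {s}) < mx (f {s}) := lt_of_le_of_ne (mn_le_mx hA.1) hne
    obtain ⟨Y, Z, hY, hZ, hne2, he⟩ := non_cancel (S := S) hkS hA.1 hlt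
    obtain ⟨Y', hY', rfl⟩ := hsurj Y hY
    obtain ⟨Z', hZ', rfl⟩ := hsurj Z hZ
    rw [← hadd _ hsPS _ hY', ← hadd _ hsPS _ hZ'] at he
    have := hinj _ (PS_add hSc hsPS hY') _ (PS_add hSc hsPS hZ') he
    have := singleton_add_cancel this
    exact hne2 (by rw [this])
  constructor
  · conv_lhs => rw [eq_singleton_of_mn_eq_mx hA.1 heq]
  · exact hA.2 (mn_mem hA.1)

end Aut
section Sigma

variable {S : Set ℕ} {k : ℕ} {f : Finset ℕ → Finset ℕ}

noncomputable def sig (f : Finset ℕ → Finset ℕ) (s : ℕ) : ℕ := mn (f {s})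

variable (hSc : ∀ a ∈ S, ∀ b ∈ S, a + b ∈ S) (hkS : ∀ n, k ≤ n → n ∈ S)
  (hf : IsPowerAut S f)

include hSc hkS hf

lemma sig_spec {s : ℕ} (hs : s ∈ S) : f {s} = {sig f s} ∧ sig f s ∈ S :=
  f_sing hSc hkS hf hs

lemma sig_add {a b : ℕ} (ha : a ∈ S) (hb : b ∈ S) :
    sig f (a + b) = sig f a + sig f b := by
  have h1 := (sig_spec hSc hkS hf ha).1
  have h2 := (sig_spec hSc hkS hf hb).1
  have h3 := (sig_spec hSc hkS hf (hSc a ha b hb)).1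
  have h4 := hf.2.2.2 {a} (singleton_mem_PS ha) {b} (singleton_mem_PS hb)
  rw [singleton_add_singleton'] at h4
  rw [h3, h1, h2, singleton_add_singleton'] at h4
  have := Finset.singleton_injective h4
  exact this

lemma sig_inj {a b : ℕ} (ha : a ∈ S) (hb : b ∈ S) (h : sig f a = sig f b) : a = b := by
  have h1 := (sig_spec hSc hkS hf ha).1
  have h2 := (sig_spec hSc hkS hf hb).1
  have : f {a} = f {b} := by rw [h1, h2, h]
  have := hf.2.1 _ (singleton_mem_PS ha) _ (singleton_mem_PS hb) this
  exact Finset.singleton_injective this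

lemma sig_mul {a : ℕ} (ha : a ∈ S) :
    ∀ n, 1 ≤ n → (n * a ∈ S ∧ sig f (n * a) = n * sig f a) := by
  intro n hn
  induction n with
  | zero => omega
  | succ m ih =>
    by_cases hm : 1 ≤ m
    · obtain ⟨hmem, heq⟩ := ih hm
      constructor
      · have h := hSc _ hmem _ ha
        have e : (m + 1) * a = m * a + a := by ring
        rw [e]; exact h
      · have : (m + 1) * a = m * a + a := by ring
        rw [this, sig_add hSc hkS hf hmem ha, heq]
        ring
    · have hm0 : m = 0 := by omega
      subst hm0
      simp [ha]

lemma sig_zero (h0 : (0:ℕ) ∈ S) : sig f 0 = 0 := by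
  have := sig_add hSc hkS hf h0 h0
  simp at this
  omega

lemma sig_cross {a b : ℕ} (ha : a ∈ S) (hb : b ∈ S) :
    a * sig f b = b * sig f a := by
  rcases Nat.eq_zero_or_pos a with rfl | ha0
  · rw [sig_zero hSc hkS hf ha]; ring_nf
  rcases Nat.eq_zero_or_pos b with rfl | hb'
  · rw [sig_zero hSc hkS hf hb]; ring_nf
  have h1 := (sig_mul hSc hkS hf hb a (by omega)).2
  have h2 := (sig_mul hSc hkS hf ha b (by omega)).2
  have : a * b = b * a := by ring
  rw [this] at h1
  omega

lemma sig_mono {a b : ℕ} (ha : a ∈ S) (hb : b ∈ S) (hab : a < b) :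
    sig f a < sig f b := by
  have hcross := sig_cross hSc hkS hf ha hb
  rcases Nat.eq_zero_or_pos (sig f b) with hz | hpos
  · exfalso
    rw [hz, Nat.mul_zero] at hcross
    have hsa : sig f a = 0 := by
      rcases Nat.mul_eq_zero.1 hcross.symm with h | h
      · omega
      · exact h
    have : a = b := sig_inj hSc hkS hf ha hb (by rw [hsa, hz])
    omega
  rcases Nat.eq_zero_or_pos a with rfl | ha'
  · rw [sig_zero hSc hkS hf ha]; omega
  by_contra hle
  push_neg at hle
  nlinarith [hcross, hpos, hle, hab]

end Sigma
section SigmaGe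

variable {S : Set ℕ} {k : ℕ} {f : Finset ℕ → Finset ℕ}
variable (hSc : ∀ a ∈ S, ∀ b ∈ S, a + b ∈ S) (hkS : ∀ n, k ≤ n → n ∈ S)
  (hf : IsPowerAut S f)

include hSc hkS hf

lemma sig_ge : ∀ s ∈ S, s ≤ sig f s := by
  classical
  intro s hs
  by_contra hlt
  push_neg at hlt
  set T : Finset ℕ := (Finset.range (s+1)).filter (· ∈ S) with hT
  set T' : Finset ℕ := (Finset.range (sig f s + 1)).filter (· ∈ S) with hT'
  have hcard : T.card ≤ T'.card := by
    apply Finset.card_le_card_of_injOn (sig f)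
    · intro y hy
      simp only [hT, Finset.mem_coe, Finset.mem_filter, Finset.mem_range] at hy
      obtain ⟨hy1, hy2⟩ := hy
      rw [hT', Finset.mem_coe, Finset.mem_filter, Finset.mem_range]
      refine ⟨?_, (sig_spec hSc hkS hf hy2).2⟩
      rcases Nat.lt_or_ge y s with h | h
      · have := sig_mono hSc hkS hf hy2 hs h
        omega
      · have : y = s := by omega
        subst this; omega
    · intro a ha b hb hab
      rw [Finset.mem_coe, Finset.mem_filter] at ha hb
      exact sig_inj hSc hkS hf ha.2 hb.2 hab
  have hsub : T' ⊂ T := by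
    constructor
    · intro y hy
      rw [hT', Finset.mem_filter, Finset.mem_range] at hy
      rw [hT, Finset.mem_filter, Finset.mem_range]
      exact ⟨by omega, hy.2⟩
    · intro hsub2
      have : s ∈ T' := hsub2 (by rw [hT, Finset.mem_filter, Finset.mem_range]; exact ⟨by omega, hs⟩)
      rw [hT', Finset.mem_filter, Finset.mem_range] at this
      omega
  have := Finset.card_lt_card hsub
  omega

end SigmaGe

section FixSing

variable {S : Set ℕ} {k : ℕ} {f g : Finset ℕ → Finset ℕ}
variable (hSc : ∀ a ∈ S, ∀ b ∈ S, a + b ∈ S) (hkS : ∀ n, k ≤ n → n ∈ S)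

include hSc hkS

lemma fix_sing (hf : IsPowerAut S f) (hg : IsPowerAut S g)
    (hgf : ∀ X ∈ PS S, g (f X) = X) : ∀ s ∈ S, f {s} = {s} := by
  intro s hs
  have h1 := (sig_spec hSc hkS hf hs).1
  have h2 := (sig_spec hSc hkS hf hs).2
  have h3 : g {sig f s} = {s} := by
    rw [← h1, hgf _ (singleton_mem_PS hs)]
  have h4 : sig g (sig f s) = s := by
    rw [sig, h3, mn_singleton]
  have h5 := sig_ge hSc hkS hg _ h2
  have h6 := sig_ge hSc hkS hf _ hs
  have : sig f s = s := by omega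
  rw [h1, this]

end FixSing
noncomputable section MinInv

def npw : ℕ → Finset ℕ → Finset ℕ
  | 0, X => X
  | n+1, X => npw n X + X

/-- shift decomposition. -/
lemma shift_decomp {X : Finset ℕ} {s : ℕ} (hs : s ≤ mn X) :
    ({s} : Finset ℕ) + X.image (· - s) = X := by
  ext t
  rw [Finset.mem_add]
  constructor
  · rintro ⟨a, ha, z, hz, rfl⟩
    rw [Finset.mem_singleton] at ha
    rw [Finset.mem_image] at hz
    obtain ⟨x, hx, rfl⟩ := hz
    have h1 := mn_le hx
    have h2 : a + (x - s) = x := by omega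
    rw [h2]; exact hx
  · intro ht
    refine ⟨s, Finset.mem_singleton_self s, t - s, Finset.mem_image_of_mem _ ht, ?_⟩
    have := mn_le ht
    omega

variable {S : Set ℕ} {k : ℕ} {f g : Finset ℕ → Finset ℕ}
variable (hSc : ∀ a ∈ S, ∀ b ∈ S, a + b ∈ S) (hkS : ∀ n, k ≤ n → n ∈ S)

include hSc in
lemma npw_PS (n : ℕ) {X : Finset ℕ} (hX : X ∈ PS S) : npw n X ∈ PS S := by
  induction n with
  | zero => exact hX
  | succ m ih => exact PS_add hSc ih hX

lemma npw_nonempty (n : ℕ) {X : Finset ℕ} (hX : X.Nonempty) : (npw n X).Nonempty := by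
  induction n with
  | zero => exact hX
  | succ m ih => exact ih.add hX

lemma mn_npw (n : ℕ) {X : Finset ℕ} (hX : X.Nonempty) : mn (npw n X) = (n+1) * mn X := by
  induction n with
  | zero => simp [npw]
  | succ m ih =>
    rw [npw, mn_add (npw_nonempty m hX) hX, ih]
    ring

lemma mx_npw (n : ℕ) {X : Finset ℕ} (hX : X.Nonempty) : mx (npw n X) = (n+1) * mx X := by
  induction n with
  | zero => simp [npw]
  | succ m ih =>
    rw [npw, mx_add (npw_nonempty m hX) hX, ih]
    ring

include hSc in
lemma f_npw (hf : IsPowerAut S f) (n : ℕ) {X : Finset ℕ} (hX : X ∈ PS S) :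
    f (npw n X) = npw n (f X) := by
  induction n with
  | zero => rfl
  | succ m ih =>
    rw [npw, hf.2.2.2 _ (npw_PS hSc m hX) _ hX, ih, npw]

include hkS in
lemma Dbound (hf : IsPowerAut S f) (hfix : ∀ s ∈ S, f {s} = {s})
    {X : Finset ℕ} (hX : X ∈ PS S) (h2k : k + k ≤ mn X) :
    mn X ≤ mn (f X) + k := by
  set s := mn X - k with hsdef
  have hsS : s ∈ S := hkS s (by omega)
  set Z := X.image (· - s) with hZ
  have hZPS : Z ∈ PS S := by
    refine ⟨hX.1.image _, ?_⟩
    intro x hx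
    rw [Finset.mem_coe, hZ, Finset.mem_image] at hx
    obtain ⟨y, hy, rfl⟩ := hx
    have := mn_le hy
    exact hkS _ (by omega)
  have hdec : ({s} : Finset ℕ) + Z = X := shift_decomp (by omega)
  have : f X = {s} + f Z := by
    rw [← hdec, hf.2.2.2 _ (singleton_mem_PS hsS) _ hZPS, hfix s hsS]
  rw [this, mn_add (Finset.singleton_nonempty s) (hf.1 _ hZPS).1, mn_singleton]
  omega

include hSc hkS in
lemma min_inv (hf : IsPowerAut S f) (hg : IsPowerAut S g)
    (hgf : ∀ X ∈ PS S, g (f X) = X)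
    (hffix : ∀ s ∈ S, f {s} = {s}) (hgfix : ∀ s ∈ S, g {s} = {s}) :
    ∀ X ∈ PS S, mn (f X) = mn X := by
  intro X hX
  set b := mn X with hb
  set b' := mn (f X) with hb'
  have hkk : (k + k) ∈ S := hkS _ (by omega)
  have hkkPS : ({k + k} : Finset ℕ) ∈ PS S := singleton_mem_PS hkk
  set X' := npw k X + {k + k} with hX'
  have hX'PS : X' ∈ PS S := PS_add hSc (npw_PS hSc k hX) hkkPS
  have hmnX' : mn X' = (k+1) * b + (k + k) := by
    rw [hX', mn_add (npw_nonempty k hX.1) (Finset.singleton_nonempty _),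
      mn_npw k hX.1, mn_singleton]
  have hfX' : f X' = npw k (f X) + {k + k} := by
    rw [hX', hf.2.2.2 _ (npw_PS hSc k hX) _ hkkPS, f_npw hSc hf k hX,
      hffix _ hkk]
  have hfX'PS : f X' ∈ PS S := hf.1 _ hX'PS
  have hmnfX' : mn (f X') = (k+1) * b' + (k + k) := by
    rw [hfX', mn_add (npw_nonempty k (hf.1 _ hX).1) (Finset.singleton_nonempty _),
      mn_npw k (hf.1 _ hX).1, mn_singleton]
  have h1 : mn X' ≤ mn (f X') + k := Dbound hkS hf hffix hX'PS (by omega)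
  have h2 : mn (f X') ≤ mn (g (f X')) + k := by
    apply Dbound hkS hg hgfix hfX'PS
    omega
  rw [hgf _ hX'PS] at h2
  rw [hmnX', hmnfX'] at h1 h2
  rcases lt_trichotomy b b' with h | h | h
  · exfalso
    have : (k+1) * (b+1) ≤ (k+1) * b' := Nat.mul_le_mul_left _ (by omega)
    nlinarith
  · rw [h]
  · exfalso
    have : (k+1) * (b'+1) ≤ (k+1) * b := Nat.mul_le_mul_left _ (by omega)
    nlinarith

end MinInv
section MaxInv

variable {S : Set ℕ} {k : ℕ} {f g : Finset ℕ → Finset ℕ}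
variable (hSc : ∀ a ∈ S, ∀ b ∈ S, a + b ∈ S) (hkS : ∀ n, k ≤ n → n ∈ S)

/-- window smoothing: `Y + [k, k+L] = [mn Y + k, mx Y + k + L]`. -/
lemma window {Y : Finset ℕ} (hY : Y.Nonempty) :
    Y + Finset.Icc k (k + (mx Y - mn Y)) =
      Finset.Icc (mn Y + k) (mx Y + (k + (mx Y - mn Y))) := by
  have hmm : mn Y ≤ mx Y := mn_le_mx hY
  ext s
  rw [Finset.mem_add, Finset.mem_Icc]
  constructor
  · rintro ⟨y, hy, z, hz, rfl⟩
    rw [Finset.mem_Icc] at hz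
    have h1 := mn_le hy
    have h2 := le_mx hy
    omega
  · rintro ⟨hs1, hs2⟩
    by_cases hc : s ≤ mn Y + k + (mx Y - mn Y)
    · exact ⟨mn Y, mn_mem hY, s - mn Y, Finset.mem_Icc.2 (by omega), by omega⟩
    · exact ⟨mx Y, mx_mem hY, s - mx Y, Finset.mem_Icc.2 (by omega), by omega⟩

include hSc hkS in
lemma max_depends (hf : IsPowerAut S f) {X1 X2 : Finset ℕ}
    (h1 : X1 ∈ PS S) (h2 : X2 ∈ PS S) (hmn : mn X1 = mn X2) (hmx : mx X1 = mx X2) :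
    mx (f X1) = mx (f X2) := by
  set L := mx X1 - mn X1 with hL
  set W : Finset ℕ := Finset.Icc k (k + L) with hW
  have hWPS : W ∈ PS S := Icc_mem_PS hkS le_rfl (by omega)
  have hL2 : mx X2 - mn X2 = L := by omega
  have he : X1 + W = X2 + W := by
    calc X1 + W = Finset.Icc (mn X1 + k) (mx X1 + (k + L)) := by
          rw [hW, hL]; exact window h1.1
    _ = Finset.Icc (mn X2 + k) (mx X2 + (k + L)) := by rw [hmn, hmx]
    _ = X2 + W := by
          rw [hW, show k + L = k + (mx X2 - mn X2) by omega]
          exact (window h2.1).symm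
  have heq := congrArg f he
  rw [hf.2.2.2 _ h1 _ hWPS, hf.2.2.2 _ h2 _ hWPS] at heq
  have hmx1 := mx_add (hf.1 _ h1).1 (hf.1 _ hWPS).1
  have hmx2 := mx_add (hf.1 _ h2).1 (hf.1 _ hWPS).1
  have : mx (f X1) + mx (f W) = mx (f X2) + mx (f W) := by
    rw [← hmx1, heq, hmx2]
  omega

include hSc hkS in
lemma stepA (hf : IsPowerAut S f) (hffix : ∀ s ∈ S, f {s} = {s})
    {X : Finset ℕ} (hX : X ∈ PS S) :
    mx (f X) + k = mx (f (Finset.Icc k (k + (mx X - mn X)))) + mn X := by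
  set b := mn X with hb
  set c := mx X with hc
  have hbc : b ≤ c := mn_le_mx hX.1
  set I : Finset ℕ := Finset.Icc k (k + (c - b)) with hI
  have hIPS : I ∈ PS S := Icc_mem_PS hkS le_rfl (by omega)
  have hc1 : (k + k) ∈ S := hkS _ (by omega)
  have hc2 : (b + k) ∈ S := hkS _ (by omega)
  have hX1 : X + {k + k} ∈ PS S := PS_add hSc hX (singleton_mem_PS hc1)
  have hX2 : I + {b + k} ∈ PS S := PS_add hSc hIPS (singleton_mem_PS hc2)
  have hmneq : mn (X + {k + k}) = mn (I + {b + k}) := by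
    rw [mn_add hX.1 (Finset.singleton_nonempty _), mn_add hIPS.1 (Finset.singleton_nonempty _),
      mn_singleton, mn_singleton, hI, mn_Icc (by omega)]
    omega
  have hmxeq : mx (X + {k + k}) = mx (I + {b + k}) := by
    rw [mx_add hX.1 (Finset.singleton_nonempty _), mx_add hIPS.1 (Finset.singleton_nonempty _),
      mx_singleton, mx_singleton, hI, mx_Icc (by omega)]
    omega
  have hmd := max_depends hSc hkS hf hX1 hX2 hmneq hmxeq
  rw [hf.2.2.2 _ hX _ (singleton_mem_PS hc1), hf.2.2.2 _ hIPS _ (singleton_mem_PS hc2),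
    hffix _ hc1, hffix _ hc2,
    mx_add (hf.1 _ hX).1 (Finset.singleton_nonempty _),
    mx_add (hf.1 _ hIPS).1 (Finset.singleton_nonempty _),
    mx_singleton, mx_singleton] at hmd
  omega

include hSc hkS in
lemma max_inv (hf : IsPowerAut S f) (hg : IsPowerAut S g)
    (hgf : ∀ X ∈ PS S, g (f X) = X) (hfg : ∀ Y ∈ PS S, f (g Y) = Y)
    (hffix : ∀ s ∈ S, f {s} = {s})
    (hminf : ∀ X ∈ PS S, mn (f X) = mn X) (hming : ∀ X ∈ PS S, mn (g X) = mn X) :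
    ∀ X ∈ PS S, mx (f X) = mx X := by
  set A : ℕ → ℕ := fun l => mx (f (Finset.Icc k (k + l))) with hA
  have hAdef : ∀ l, A l = mx (f (Finset.Icc k (k + l))) := fun l => rfl
  have hIPS : ∀ l : ℕ, Finset.Icc k (k + l) ∈ PS S := fun l =>
    Icc_mem_PS hkS le_rfl (by omega)
  have hAk : ∀ l, k ≤ A l := by
    intro l
    have h1 : mn (f (Finset.Icc k (k + l))) = k := by
      rw [hminf _ (hIPS l), mn_Icc (by omega)]
    have := mn_le_mx (hf.1 _ (hIPS l)).1
    rw [hAdef l]; omega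
  have hAadd : ∀ l1 l2, A (l1 + l2) + k = A l1 + A l2 := by
    intro l1 l2
    have hsum : Finset.Icc k (k + l1) + Finset.Icc k (k + l2)
        = Finset.Icc (k + k) (k + k + (l1 + l2)) := by
      rw [Icc_add_Icc' (by omega) (by omega)]
      congr 1 <;> omega
    have h1 := hf.2.2.2 _ (hIPS l1) _ (hIPS l2)
    rw [hsum] at h1
    have hXPS : Finset.Icc (k + k) (k + k + (l1 + l2)) ∈ PS S :=
      Icc_mem_PS hkS (by omega) (by omega)
    have h2 := stepA hSc hkS hf hffix hXPS
    rw [mn_Icc (by omega), mx_Icc (by omega)] at h2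
    have h3 : mx (f (Finset.Icc (k+k) (k+k+(l1+l2)))) = A l1 + A l2 := by
      rw [h1, mx_add (hf.1 _ (hIPS l1)).1 (hf.1 _ (hIPS l2)).1]
    rw [show k + k + (l1 + l2) - (k + k) = l1 + l2 by omega] at h2
    rw [h3] at h2
    rw [hAdef (l1 + l2)]
    omega
  set q := A 1 - k with hqdef
  have hq1 : A 1 = k + q := by have := hAk 1; omega
  have hAl : ∀ l, A l = k + q * l := by
    intro l
    induction l with
    | zero =>
      have h0 : A 0 = k := by
        rw [hAdef 0, show k + 0 = k by omega, Finset.Icc_self, hffix _ (hkS k le_rfl),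
          mx_singleton]
      omega
    | succ m ih =>
      have := hAadd m 1
      rw [ih, hq1] at this
      have e : q * (m + 1) = q * m + q := by ring
      omega
  have hq0 : q ≠ 0 := by
    intro h0
    have h1 : mx (f (Finset.Icc k (k + 1))) = k := by
      have := hAl 1; rw [h0, hAdef 1] at this; omega
    have h2 : mn (f (Finset.Icc k (k + 1))) = k := by
      rw [hminf _ (hIPS 1), mn_Icc (by omega)]
    have h3 : f (Finset.Icc k (k + 1)) = {k} := by
      have := eq_singleton_of_mn_eq_mx (hf.1 _ (hIPS 1)).1 (by omega)
      rw [h2] at this; exact this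
    have h4 : f {k} = {k} := hffix _ (hkS k le_rfl)
    have h5 := hf.2.1 _ (hIPS 1) _ (singleton_mem_PS (hkS k le_rfl)) (by rw [h3, h4])
    have : k + 1 ∈ Finset.Icc k (k + 1) := Finset.mem_Icc.2 (by omega)
    rw [h5, Finset.mem_singleton] at this
    omega
  have hq : q = 1 := by
    set X0 := g (Finset.Icc k (k + 1)) with hX0
    have hX0PS : X0 ∈ PS S := hg.1 _ (hIPS 1)
    have hfX0 : f X0 = Finset.Icc k (k + 1) := hfg _ (hIPS 1)
    have hmnX0 : mn X0 = k := by
      rw [hX0, hming _ (hIPS 1), mn_Icc (by omega)]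
    have h2 := stepA hSc hkS hf hffix hX0PS
    rw [hfX0, hmnX0, mx_Icc (by omega)] at h2
    have h3 := hAl (mx X0 - k)
    rw [hAdef] at h3
    rw [h3] at h2
    have : q * (mx X0 - k) = 1 := by omega
    exact Nat.eq_one_of_mul_eq_one_right this
  intro X hX
  have h2 := stepA hSc hkS hf hffix hX
  have h3 := hAl (mx X - mn X)
  rw [hAdef] at h3
  rw [h3, hq] at h2
  have := mn_le_mx hX.1
  omega

end MaxInv
section Final

variable {S : Set ℕ} {k : ℕ} {f : Finset ℕ → Finset ℕ}
variable (hSc : ∀ a ∈ S, ∀ b ∈ S, a + b ∈ S) (hkS : ∀ n, k ≤ n → n ∈ S)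

include hkS in
lemma fwd {b c : ℕ} (hb : k + k ≤ b) (hbc : b ≤ c) {W : Finset ℕ} (hW : W ∈ PS S)
    (h1 : k ≤ mn W) (h2 : mn W + k ≤ b) (h3 : 2 * (mx W - mn W) ≤ (c - b) + 1) :
    ∃ Z ∈ PS S, W + Z = Finset.Icc b c := by
  have hwv : mn W ≤ mx W := mn_le_mx hW.1
  have hvc : mx W ≤ c := by omega
  refine ⟨Finset.Icc (b - mn W) (c - mx W), Icc_mem_PS hkS (by omega) (by omega), ?_⟩
  ext s
  rw [Finset.mem_add, Finset.mem_Icc]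
  constructor
  · rintro ⟨x, hx, z, hz, rfl⟩
    rw [Finset.mem_Icc] at hz
    have hx1 := mn_le hx
    have hx2 := le_mx hx
    omega
  · rintro ⟨hs1, hs2⟩
    by_cases hcase : s ≤ mn W + (c - mx W)
    · exact ⟨mn W, mn_mem hW.1, s - mn W, Finset.mem_Icc.2 (by omega), by omega⟩
    · exact ⟨mx W, mx_mem hW.1, s - mx W, Finset.mem_Icc.2 (by omega), by omega⟩

include hkS in
lemma bwd {X : Finset ℕ} (hX : X ∈ PS S) (hb2k : k + k ≤ mn X)
    (H : ∀ W ∈ PS S, k ≤ mn W → mn W + k ≤ mn X →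
      2 * (mx W - mn W) ≤ (mx X - mn X) + 1 → ∃ Z ∈ PS S, W + Z = X) :
    X = Finset.Icc (mn X) (mx X) := by
  set b := mn X with hbdef
  set c := mx X with hcdef
  have hbc : b ≤ c := mn_le_mx hX.1
  set l := c - b with hldef
  set m := l / 2 with hmdef
  set W : Finset ℕ := Finset.Icc (b - k) (b - k + m) with hWdef
  have hWPS : W ∈ PS S := Icc_mem_PS hkS (by omega) (by omega)
  have hmnW : mn W = b - k := by rw [hWdef, mn_Icc (by omega)]
  have hmxW : mx W = b - k + m := by rw [hWdef, mx_Icc (by omega)]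
  obtain ⟨Z, hZPS, hZeq⟩ := H W hWPS (by omega) (by omega) (by rw [hmnW, hmxW]; omega)
  have hmnZ : mn W + mn Z = b := by
    rw [← mn_add hWPS.1 hZPS.1, hZeq]
  have hmxZ : mx W + mx Z = c := by
    rw [← mx_add hWPS.1 hZPS.1, hZeq]
  apply Finset.Subset.antisymm
  · exact subset_Icc_mn_mx X
  · intro t ht
    rw [Finset.mem_Icc] at ht
    rw [← hZeq, Finset.mem_add]
    by_cases hcase : t ≤ b + m
    · refine ⟨(b - k) + (t - b), ?_, mn Z, mn_mem hZPS.1, by omega⟩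
      rw [hWdef, Finset.mem_Icc]; omega
    · refine ⟨t - mx Z, ?_, mx Z, mx_mem hZPS.1, by omega⟩
      rw [hWdef, Finset.mem_Icc]
      omega

end Final

/-- An automorphism of `P(S)` fixes every discrete interval `[i, j]` with `k ≤ i ≤ j`,
where `k` is the critical element of `S`. -/
theorem stmt4 (S : Set ℕ) (hS : IsNumSgp S) (k : ℕ) (hk : IsCritical S k)
    (f : Finset ℕ → Finset ℕ) (hf : IsPowerAut S f)
    (i j : ℕ) (hi : k ≤ i) (hij : i ≤ j) :
    f (Finset.Icc i j) = Finset.Icc i j := by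
  obtain ⟨hSc, -⟩ := hS
  obtain ⟨hkS, -⟩ := hk
  obtain ⟨g, hg, hgf, hfg⟩ := exists_inverse_aut hSc hf
  have hffix : ∀ s ∈ S, f {s} = {s} := fix_sing hSc hkS hf hg hgf
  have hgfix : ∀ s ∈ S, g {s} = {s} := fix_sing hSc hkS hg hf hfg
  have hminf := min_inv hSc hkS hf hg hgf hffix hgfix
  have hming := min_inv hSc hkS hg hf hfg hgfix hffix
  have hmaxf := max_inv hSc hkS hf hg hgf hfg hffix hminf hming
  have hmaxg := max_inv hSc hkS hg hf hfg hgf hgfix hming hminf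
  have hkmem : k ∈ S := hkS k le_rfl
  have hNPS : Finset.Icc i j ∈ PS S := Icc_mem_PS hkS hi hij
  have hN'PS : Finset.Icc (i + k) (j + k) ∈ PS S := Icc_mem_PS hkS (by omega) (by omega)
  have hNshift : Finset.Icc i j + {k} = Finset.Icc (i + k) (j + k) := by
    rw [← Finset.Icc_self k, Icc_add_Icc' hij le_rfl]
  set X := f (Finset.Icc (i + k) (j + k)) with hXdef
  have hXPS : X ∈ PS S := hf.1 _ hN'PS
  have hmnX : mn X = i + k := by
    rw [hXdef, hminf _ hN'PS, mn_Icc (by omega)]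
  have hmxX : mx X = j + k := by
    rw [hXdef, hmaxf _ hN'PS, mx_Icc (by omega)]
  have H : ∀ W ∈ PS S, k ≤ mn W → mn W + k ≤ mn X →
      2 * (mx W - mn W) ≤ (mx X - mn X) + 1 → ∃ Z ∈ PS S, W + Z = X := by
    intro W hW h1 h2 h3
    have hW'PS : g W ∈ PS S := hg.1 _ hW
    have hmnW' : mn (g W) = mn W := hming _ hW
    have hmxW' : mx (g W) = mx W := hmaxg _ hW
    obtain ⟨Z, hZPS, hZeq⟩ := fwd hkS (b := i + k) (c := j + k) (by omega) (by omega)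
      hW'PS (by omega) (by omega) (by rw [hmnW', hmxW']; omega)
    refine ⟨f Z, hf.1 _ hZPS, ?_⟩
    have := congrArg f hZeq
    rw [hf.2.2.2 _ hW'PS _ hZPS, hfg _ hW] at this
    rw [this, hXdef]
  have hXeq : X = Finset.Icc (i + k) (j + k) := by
    have := bwd hkS hXPS (by omega) H
    rw [hmnX, hmxX] at this
    exact this
  have hfin : f (Finset.Icc i j + {k}) = Finset.Icc i j + {k} := by
    rw [hNshift, ← hXdef, hXeq]
  rw [hf.2.2.2 _ hNPS _ (singleton_mem_PS hkmem), hffix _ hkmem] at hfin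
  have : ({k} : Finset ℕ) + f (Finset.Icc i j) = {k} + Finset.Icc i j := by
    rw [add_comm, hfin, add_comm]
  exact singleton_add_cancel this
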